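/- Let Λ = ℤ³ be equipped with the symmetric bilinear form ⟨·,·⟩ whose Gram matrix in the standard basis is [[4, 4, 7], [4, 0, 1], [7, 1, −2]], and let A = (1, 0, 0). Then: (i) there is no v ∈ Λ with ⟨A, v⟩ = 1 and ⟨v, v⟩ = 0; (ii) there is no v ∈ Λ with ⟨A, v⟩ = 2 and ⟨v, v⟩ = 0; (iii) there is no v ∈ Λ with ⟨A, v⟩ = 0 and ⟨v, v⟩ = −2. -/

import Mathlib

/-- The Gram matrix of the lattice `Λ = ℤ³`. -/
def gram : Matrix (Fin 3) (Fin 3) ℤ := !![4, 4, 7; 4, 0, 1; 7, 1, -2]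

/-- The symmetric bilinear form on `Λ = ℤ³` with Gram matrix `[[4,4,7],[4,0,1],[7,1,-2]]`. -/
def bf (u v : Fin 3 → ℤ) : ℤ := dotProduct u (gram.mulVec v)

/-- The class `A = (1, 0, 0)`. -/
def Avec : Fin 3 → ℤ := ![1, 0, 0]

/-- In the lattice `Λ = ℤ³` with Gram matrix `[[4,4,7],[4,0,1],[7,1,-2]]` and
`A = (1,0,0)`: (i) there is no `v` with `⟨A, v⟩ = 1` and `v² = 0`; (ii) there is no `v`
with `⟨A, v⟩ = 2` and `v² = 0`; (iii) there is no `v` with `⟨A, v⟩ = 0` and `v² = −2`. -/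
theorem statement19 :
    (¬ ∃ v : Fin 3 → ℤ, bf Avec v = 1 ∧ bf v v = 0) ∧
    (¬ ∃ v : Fin 3 → ℤ, bf Avec v = 2 ∧ bf v v = 0) ∧
    (¬ ∃ v : Fin 3 → ℤ, bf Avec v = 0 ∧ bf v v = -2) := by
  refine ⟨?_, ?_, ?_⟩
  · rintro ⟨v, h1, h2⟩
    simp [bf, gram, Avec, Matrix.mulVec, dotProduct, Fin.sum_univ_three] at h1 h2
    set x := v 0; set y := v 1; set z := v 2
    have key : (8*x+2*z-2)^2 + 84*z^2 = 4 := by linear_combination (8*(4*x+z))*h1 - 16*h2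
    have hz : z = 0 := by
      rcases lt_trichotomy z 0 with h | h | h
      · nlinarith [sq_nonneg (8*x+2*z-2)]
      · exact h
      · nlinarith [sq_nonneg (8*x+2*z-2)]
    rw [hz] at h1
    omega
  · rintro ⟨v, h1, h2⟩
    simp [bf, gram, Avec, Matrix.mulVec, dotProduct, Fin.sum_univ_three] at h1 h2
    set x := v 0; set y := v 1; set z := v 2
    have key : (8*x+2*z-4)^2 + 84*z^2 = 16 := by linear_combination (8*(4*x+z))*h1 - 16*h2
    have hz : z = 0 := by
      rcases lt_trichotomy z 0 with h | h | h
      · nlinarith [sq_nonneg (8*x+2*z-4)]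
      · exact h
      · nlinarith [sq_nonneg (8*x+2*z-4)]
    rw [hz] at h1
    omega
  · rintro ⟨v, h1, h2⟩
    simp [bf, gram, Avec, Matrix.mulVec, dotProduct, Fin.sum_univ_three] at h1 h2
    set x := v 0; set y := v 1; set z := v 2
    have key : (8*x+2*z)^2 + 84*z^2 = 32 := by linear_combination (8*(4*x+z))*h1 - 16*h2
    have hz : z = 0 := by
      rcases lt_trichotomy z 0 with h | h | h
      · nlinarith [sq_nonneg (8*x+2*z)]
      · exact h
      · nlinarith [sq_nonneg (8*x+2*z)]
    rw [hz] at key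
    have hx : (8*x)^2 = 32 := by linarith
    rcases lt_trichotomy x 0 with h | h | h
    · nlinarith
    · rw [h] at hx; norm_num at hx
    · nlinarith
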